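/- Let Λ and Γ be g-fusion frames for H and K with bounds (A, B) and (C, D) and frame operators S_Λ, S_Γ, and set S = S_Λ ⊗ S_Γ. Then the canonical dual family Θ = {(S^{-1}(V_i ⊗ W_j), (Λ_i ⊗ Γ_j) P_{V_i ⊗ W_j} S^{-1}, v_i w_j)}_{i,j} is a g-fusion frame for H ⊗ K with lower bound 1/(BD) and upper bound BD/(A²C²). -/

import Mathlib

noncomputable section

open Submodule ContinuousLinearMap

local notation "⟪" x ", " y "⟫" => @inner ℂ _ _ x y

/-- An abstract realization of the Hilbert-space tensor product of `H` and `K`: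
a map `tmul : H → K → E` whose inner products multiply and whose elementary
tensors have dense span. -/
structure HilbertTensor (H K E : Type*) [NormedAddCommGroup H] [InnerProductSpace ℂ H]
    [NormedAddCommGroup K] [InnerProductSpace ℂ K]
    [NormedAddCommGroup E] [InnerProductSpace ℂ E] where
  tmul : H → K → E
  inner_tmul : ∀ (f f' : H) (g g' : K),
    ⟪tmul f g, tmul f' g'⟫ = ⟪f, f'⟫ * ⟪g, g'⟫
  dense_span : Dense (Submodule.span ℂ (Set.range fun p : H × K => tmul p.1 p.2) : Set E)

variable {H K E H' K' E' : Type*}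
variable [NormedAddCommGroup H] [InnerProductSpace ℂ H]
variable [NormedAddCommGroup K] [InnerProductSpace ℂ K]
variable [NormedAddCommGroup E] [InnerProductSpace ℂ E]
variable [NormedAddCommGroup H'] [InnerProductSpace ℂ H']
variable [NormedAddCommGroup K'] [InnerProductSpace ℂ K']
variable [NormedAddCommGroup E'] [InnerProductSpace ℂ E']

/-- The orthogonal projection onto a (closed) subspace, as an operator `H →L[ℂ] H`. -/
def projL (V : Submodule ℂ H) [HasOrthogonalProjection V] : H →L[ℂ] H :=
  V.subtypeL.comp (orthogonalProjection V)

/-- `R` is the tensor product operator `Q ⊗ T`, i.e. it is determined on elementary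
tensors by `(Q ⊗ T)(f ⊗ g) = Qf ⊗ Tg`. -/
def IsTensorOp (tp : HilbertTensor H K E) (tp' : HilbertTensor H' K' E')
    (Q : H →L[ℂ] H') (T : K →L[ℂ] K') (R : E →L[ℂ] E') : Prop :=
  ∀ (f : H) (g : K), R (tp.tmul f g) = tp'.tmul (Q f) (T g)

/-- The tensor product `V ⊗ W` of subspaces: the closure of the span of elementary
tensors of elements of `V` and `W`. -/
def tsub (tp : HilbertTensor H K E) (V : Submodule ℂ H) (W : Submodule ℂ K) : Submodule ℂ E :=
  (Submodule.span ℂ {x : E | ∃ f ∈ V, ∃ g ∈ W, x = tp.tmul f g}).topologicalClosure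

/-- `{(V i, Λ i, v i)}` is a g-fusion Bessel sequence in `H` with bound `B`. -/
def IsGFusionBessel {ι : Type*} {Hi : ι → Type*}
    [∀ i, NormedAddCommGroup (Hi i)] [∀ i, InnerProductSpace ℂ (Hi i)]
    (V : ι → Submodule ℂ H) [∀ i, HasOrthogonalProjection (V i)]
    (Λ : ∀ i, H →L[ℂ] Hi i) (v : ι → ℝ) (B : ℝ) : Prop :=
  (∀ i, 0 < v i) ∧ 0 < B ∧
    ∀ f : H, ∑' i, (v i) ^ 2 * ‖Λ i (projL (V i) f)‖ ^ 2 ≤ B * ‖f‖ ^ 2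

/-- `{(V i, Λ i, v i)}` is a g-fusion frame for `H` with bounds `A ≤ B`. -/
def IsGFusionFrame {ι : Type*} {Hi : ι → Type*}
    [∀ i, NormedAddCommGroup (Hi i)] [∀ i, InnerProductSpace ℂ (Hi i)]
    (V : ι → Submodule ℂ H) [∀ i, HasOrthogonalProjection (V i)]
    (Λ : ∀ i, H →L[ℂ] Hi i) (v : ι → ℝ) (A B : ℝ) : Prop :=
  (∀ i, 0 < v i) ∧ 0 < A ∧ A ≤ B ∧
    ∀ f : H, A * ‖f‖ ^ 2 ≤ ∑' i, (v i) ^ 2 * ‖Λ i (projL (V i) f)‖ ^ 2 ∧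
      ∑' i, (v i) ^ 2 * ‖Λ i (projL (V i) f)‖ ^ 2 ≤ B * ‖f‖ ^ 2

/-! ### Auxiliary lemmas -/

theorem projL_apply (V : Submodule ℂ H) [HasOrthogonalProjection V] (x : H) :
    projL V x = ↑(orthogonalProjection V x) := rfl

set_option linter.unusedSectionVars false

section FrameAux

variable [CompleteSpace H]
variable {ι : Type*} {Hi : ι → Type*}
  [∀ i, NormedAddCommGroup (Hi i)] [∀ i, InnerProductSpace ℂ (Hi i)]
  [∀ i, CompleteSpace (Hi i)]
  {V : ι → Submodule ℂ H} [∀ i, HasOrthogonalProjection (V i)]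
  {Λ : ∀ i, H →L[ℂ] Hi i} {v : ι → ℝ} {A B : ℝ}

theorem gff_summable (hΛ : IsGFusionFrame V Λ v A B) (f : H) :
    Summable fun i => (v i) ^ 2 * ‖Λ i (projL (V i) f)‖ ^ 2 := by
  rcases eq_or_ne f 0 with rfl | hf
  · have h0 : (fun i => (v i) ^ 2 * ‖Λ i (projL (V i) (0 : H))‖ ^ 2) = fun _ => (0 : ℝ) := by
      funext i; simp
    rw [h0]; exact summable_zero
  · by_contra hs
    have h0 : ∑' i, (v i) ^ 2 * ‖Λ i (projL (V i) f)‖ ^ 2 = 0 :=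
      tsum_eq_zero_of_not_summable hs
    have h1 := (hΛ.2.2.2 f).1
    rw [h0] at h1
    have hA := hΛ.2.1
    have hfn : 0 < ‖f‖ := norm_pos_iff.mpr hf
    nlinarith [mul_pos hA (pow_pos hfn 2)]

theorem gff_sum_le (hΛ : IsGFusionFrame V Λ v A B) (f : H) (t : Finset ι) :
    ∑ i ∈ t, (v i) ^ 2 * ‖Λ i (projL (V i) f)‖ ^ 2 ≤ B * ‖f‖ ^ 2 :=
  le_trans (Summable.sum_le_tsum t (fun i _ => by positivity) (gff_summable hΛ f)) (hΛ.2.2.2 f).2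

theorem gff_inner_term (f g : H) (i : ι) :
    ⟪g, ((v i) ^ 2 : ℝ) • projL (V i)
        (ContinuousLinearMap.adjoint (Λ i) (Λ i (projL (V i) f)))⟫
      = (((v i) ^ 2 : ℝ) : ℂ) * ⟪Λ i (projL (V i) g), Λ i (projL (V i) f)⟫ := by
  rw [← algebraMap_smul ℂ ((v i) ^ 2 : ℝ), inner_smul_right]
  congr 1
  rw [show ∀ x, projL (V i) x = (V i).starProjection x from fun _ => rfl,
    ← inner_starProjection_left_eq_right, ContinuousLinearMap.adjoint_inner_right]
  rfl

theorem gff_norm_sum_le (hΛ : IsGFusionFrame V Λ v A B) (f : H) (t : Finset ι) :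
    ‖∑ i ∈ t, ((v i) ^ 2 : ℝ) • projL (V i)
        (ContinuousLinearMap.adjoint (Λ i) (Λ i (projL (V i) f)))‖
      ≤ Real.sqrt B * Real.sqrt (∑ i ∈ t, (v i) ^ 2 * ‖Λ i (projL (V i) f)‖ ^ 2) := by
  have hB : (0:ℝ) < B := lt_of_lt_of_le hΛ.2.1 hΛ.2.2.1
  set h : H := ∑ i ∈ t, ((v i) ^ 2 : ℝ) • projL (V i)
      (ContinuousLinearMap.adjoint (Λ i) (Λ i (projL (V i) f))) with hh
  have e2 : ⟪h, h⟫ = ∑ i ∈ t, (((v i) ^ 2 : ℝ) : ℂ) *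
      ⟪Λ i (projL (V i) h), Λ i (projL (V i) f)⟫ := by
    conv_lhs => rw [hh]
    rw [inner_sum]
    exact Finset.sum_congr rfl fun i _ => gff_inner_term f h i
  have e1 : (‖h‖ ^ 2 : ℝ) = (⟪h, h⟫).re := by
    have e := inner_self_eq_norm_sq (𝕜 := ℂ) h
    simpa using e.symm
  have e3 : (‖h‖ ^ 2 : ℝ) ≤ ∑ i ∈ t, (v i * ‖Λ i (projL (V i) h)‖) *
      (v i * ‖Λ i (projL (V i) f)‖) := by
    rw [e1, e2, Complex.re_sum]
    refine Finset.sum_le_sum fun i _ => ?_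
    have hv : (0:ℝ) < v i := hΛ.1 i
    have hre : ((((v i) ^ 2 : ℝ) : ℂ) * ⟪Λ i (projL (V i) h), Λ i (projL (V i) f)⟫).re
        = (v i) ^ 2 * (⟪Λ i (projL (V i) h), Λ i (projL (V i) f)⟫).re := by
      exact Complex.re_ofReal_mul _ _
    rw [hre]
    have h4 : (⟪Λ i (projL (V i) h), Λ i (projL (V i) f)⟫).re
        ≤ ‖Λ i (projL (V i) h)‖ * ‖Λ i (projL (V i) f)‖ := by
      refine le_trans (Complex.re_le_norm _) ?_
      exact norm_inner_le_norm _ _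
    nlinarith [norm_nonneg (Λ i (projL (V i) h)), norm_nonneg (Λ i (projL (V i) f)),
      sq_nonneg (v i)]
  have e4 : ∑ i ∈ t, (v i * ‖Λ i (projL (V i) h)‖) * (v i * ‖Λ i (projL (V i) f)‖)
      ≤ Real.sqrt (∑ i ∈ t, (v i) ^ 2 * ‖Λ i (projL (V i) h)‖ ^ 2) *
        Real.sqrt (∑ i ∈ t, (v i) ^ 2 * ‖Λ i (projL (V i) f)‖ ^ 2) := by
    have := Real.sum_mul_le_sqrt_mul_sqrt t
      (fun i => v i * ‖Λ i (projL (V i) h)‖) (fun i => v i * ‖Λ i (projL (V i) f)‖)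
    simpa [mul_pow] using this
  have e5 : Real.sqrt (∑ i ∈ t, (v i) ^ 2 * ‖Λ i (projL (V i) h)‖ ^ 2)
      ≤ Real.sqrt B * ‖h‖ := by
    have := gff_sum_le hΛ h t
    calc Real.sqrt (∑ i ∈ t, (v i) ^ 2 * ‖Λ i (projL (V i) h)‖ ^ 2)
        ≤ Real.sqrt (B * ‖h‖ ^ 2) := Real.sqrt_le_sqrt this
      _ = Real.sqrt B * ‖h‖ := by
          rw [Real.sqrt_mul hB.le, Real.sqrt_sq (norm_nonneg _)]
  have key : ‖h‖ ^ 2 ≤ Real.sqrt B *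
      Real.sqrt (∑ i ∈ t, (v i) ^ 2 * ‖Λ i (projL (V i) f)‖ ^ 2) * ‖h‖ := by
    calc ‖h‖ ^ 2 ≤ ∑ i ∈ t, (v i * ‖Λ i (projL (V i) h)‖) *
          (v i * ‖Λ i (projL (V i) f)‖) := e3
      _ ≤ Real.sqrt (∑ i ∈ t, (v i) ^ 2 * ‖Λ i (projL (V i) h)‖ ^ 2) *
          Real.sqrt (∑ i ∈ t, (v i) ^ 2 * ‖Λ i (projL (V i) f)‖ ^ 2) := e4
      _ ≤ (Real.sqrt B * ‖h‖) *
          Real.sqrt (∑ i ∈ t, (v i) ^ 2 * ‖Λ i (projL (V i) f)‖ ^ 2) := by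
          exact mul_le_mul_of_nonneg_right e5 (Real.sqrt_nonneg _)
      _ = Real.sqrt B * Real.sqrt (∑ i ∈ t, (v i) ^ 2 * ‖Λ i (projL (V i) f)‖ ^ 2) * ‖h‖ := by
          ring
  rcases eq_or_lt_of_le (norm_nonneg h) with h0 | h0
  · rw [← h0]; positivity
  · have := key
    rw [pow_two] at this
    exact le_of_mul_le_mul_right (by linarith) h0

theorem gff_vec_summable (hΛ : IsGFusionFrame V Λ v A B) (f : H) :
    Summable fun i => ((v i) ^ 2 : ℝ) • projL (V i)
        (ContinuousLinearMap.adjoint (Λ i) (Λ i (projL (V i) f))) := by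
  have hB : (0:ℝ) < B := lt_of_lt_of_le hΛ.2.1 hΛ.2.2.1
  rw [summable_iff_vanishing]
  intro e he
  obtain ⟨ε, hε, hball⟩ := Metric.mem_nhds_iff.mp he
  set δ : ℝ := (ε / (Real.sqrt B + 1)) ^ 2 with hδ
  have hδpos : 0 < δ := by positivity
  obtain ⟨s, hs⟩ := summable_iff_vanishing.mp (gff_summable hΛ f)
    (Metric.ball 0 δ) (Metric.ball_mem_nhds 0 hδpos)
  refine ⟨s, fun t ht => hball ?_⟩
  have h3 := hs t ht
  rw [Metric.mem_ball, dist_zero_right, Real.norm_eq_abs] at h3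
  have hsum_nonneg : (0:ℝ) ≤ ∑ i ∈ t, (v i) ^ 2 * ‖Λ i (projL (V i) f)‖ ^ 2 :=
    Finset.sum_nonneg fun i _ => by positivity
  have h4 : ∑ i ∈ t, (v i) ^ 2 * ‖Λ i (projL (V i) f)‖ ^ 2 < δ := by
    rwa [abs_of_nonneg hsum_nonneg] at h3
  rw [Metric.mem_ball, dist_zero_right]
  calc ‖∑ i ∈ t, ((v i) ^ 2 : ℝ) • projL (V i)
        (ContinuousLinearMap.adjoint (Λ i) (Λ i (projL (V i) f)))‖
      ≤ Real.sqrt B * Real.sqrt (∑ i ∈ t, (v i) ^ 2 * ‖Λ i (projL (V i) f)‖ ^ 2) :=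
        gff_norm_sum_le hΛ f t
    _ < ε := by
        have h5 : Real.sqrt (∑ i ∈ t, (v i) ^ 2 * ‖Λ i (projL (V i) f)‖ ^ 2)
            < ε / (Real.sqrt B + 1) := by
          have := Real.sqrt_lt_sqrt hsum_nonneg h4
          rwa [hδ, Real.sqrt_sq (by positivity)] at this
        have hsb : (0:ℝ) ≤ Real.sqrt B := Real.sqrt_nonneg B
        have h6 : Real.sqrt B * Real.sqrt (∑ i ∈ t, (v i) ^ 2 * ‖Λ i (projL (V i) f)‖ ^ 2)
            ≤ Real.sqrt B * (ε / (Real.sqrt B + 1)) := by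
          nlinarith [Real.sqrt_nonneg (∑ i ∈ t, (v i) ^ 2 * ‖Λ i (projL (V i) f)‖ ^ 2)]
        have h7 : Real.sqrt B * (ε / (Real.sqrt B + 1)) < ε := by
          rw [mul_div_assoc']
          rw [div_lt_iff₀ (by positivity)]
          nlinarith
        linarith

theorem gff_tsum_norm_le (hΛ : IsGFusionFrame V Λ v A B) (f : H) :
    ‖∑' i, ((v i) ^ 2 : ℝ) • projL (V i)
        (ContinuousLinearMap.adjoint (Λ i) (Λ i (projL (V i) f)))‖
      ≤ Real.sqrt B * Real.sqrt (∑' i, (v i) ^ 2 * ‖Λ i (projL (V i) f)‖ ^ 2) := by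
  have hsum := gff_vec_summable hΛ f
  have htend : Filter.Tendsto
      (fun s : Finset ι => ‖∑ i ∈ s, ((v i) ^ 2 : ℝ) • projL (V i)
        (ContinuousLinearMap.adjoint (Λ i) (Λ i (projL (V i) f)))‖)
      Filter.atTop (nhds ‖∑' i, ((v i) ^ 2 : ℝ) • projL (V i)
        (ContinuousLinearMap.adjoint (Λ i) (Λ i (projL (V i) f)))‖) :=
    (continuous_norm.tendsto _).comp hsum.hasSum
  refine le_of_tendsto htend (Filter.Eventually.of_forall fun t => ?_)
  refine le_trans (gff_norm_sum_le hΛ f t) ?_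
  refine mul_le_mul_of_nonneg_left (Real.sqrt_le_sqrt ?_) (Real.sqrt_nonneg _)
  exact Summable.sum_le_tsum t (fun i _ => by positivity) (gff_summable hΛ f)

theorem gff_inner_tsum (hΛ : IsGFusionFrame V Λ v A B) (f g : H) :
    ⟪g, ∑' i, ((v i) ^ 2 : ℝ) • projL (V i)
        (ContinuousLinearMap.adjoint (Λ i) (Λ i (projL (V i) f)))⟫
      = ∑' i, (((v i) ^ 2 : ℝ) : ℂ) * ⟪Λ i (projL (V i) g), Λ i (projL (V i) f)⟫ := by
  have h1 := ContinuousLinearMap.map_tsum (innerSL ℂ g) (gff_vec_summable hΛ f)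
  refine Eq.trans h1 (tsum_congr fun i => ?_)
  exact gff_inner_term f g i

theorem gff_inner_S (hΛ : IsGFusionFrame V Λ v A B) {SΛ : H →L[ℂ] H}
    (hSΛ : ∀ f : H, SΛ f = ∑' i, ((v i) ^ 2 : ℝ) •
      projL (V i) (ContinuousLinearMap.adjoint (Λ i) (Λ i (projL (V i) f))))
    (f g : H) :
    ⟪g, SΛ f⟫ = ∑' i, (((v i) ^ 2 : ℝ) : ℂ) *
      ⟪Λ i (projL (V i) g), Λ i (projL (V i) f)⟫ := by
  rw [hSΛ f]; exact gff_inner_tsum hΛ f g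

theorem gff_inner_self (hΛ : IsGFusionFrame V Λ v A B) {SΛ : H →L[ℂ] H}
    (hSΛ : ∀ f : H, SΛ f = ∑' i, ((v i) ^ 2 : ℝ) •
      projL (V i) (ContinuousLinearMap.adjoint (Λ i) (Λ i (projL (V i) f))))
    (f : H) :
    ⟪f, SΛ f⟫ = ((∑' i, (v i) ^ 2 * ‖Λ i (projL (V i) f)‖ ^ 2 : ℝ) : ℂ) := by
  rw [gff_inner_S hΛ hSΛ f f]
  have h2 : ∀ i, (((v i) ^ 2 : ℝ) : ℂ) * ⟪Λ i (projL (V i) f), Λ i (projL (V i) f)⟫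
      = Complex.ofRealCLM ((v i) ^ 2 * ‖Λ i (projL (V i) f)‖ ^ 2) := fun i => by
    rw [inner_self_eq_norm_sq_to_K]
    simp only [Complex.ofRealCLM_apply]
    push_cast
    rfl
  rw [tsum_congr h2, ← ContinuousLinearMap.map_tsum Complex.ofRealCLM (gff_summable hΛ f)]
  rfl

theorem gff_symm (hΛ : IsGFusionFrame V Λ v A B) {SΛ : H →L[ℂ] H}
    (hSΛ : ∀ f : H, SΛ f = ∑' i, ((v i) ^ 2 : ℝ) •
      projL (V i) (ContinuousLinearMap.adjoint (Λ i) (Λ i (projL (V i) f))))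
    (f g : H) : ⟪SΛ f, g⟫ = ⟪f, SΛ g⟫ := by
  rw [← inner_conj_symm (SΛ f) g, gff_inner_S hΛ hSΛ f g]
  have hc := RCLike.conjCLE.map_tsum (L := SummationFilter.unconditional ι) (f := fun i =>
    (((v i) ^ 2 : ℝ) : ℂ) * ⟪Λ i (projL (V i) g), Λ i (projL (V i) f)⟫)
  rw [show (starRingEnd ℂ) (∑' i, (((v i) ^ 2 : ℝ) : ℂ) *
      ⟪Λ i (projL (V i) g), Λ i (projL (V i) f)⟫) = _ from hc]
  rw [gff_inner_S hΛ hSΛ g f]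
  exact tsum_congr fun i => by
    simp only [RCLike.conjCLE_apply, map_mul, Complex.conj_ofReal, inner_conj_symm]

theorem gff_op_lower (hΛ : IsGFusionFrame V Λ v A B) {SΛ : H →L[ℂ] H}
    (hSΛ : ∀ f : H, SΛ f = ∑' i, ((v i) ^ 2 : ℝ) •
      projL (V i) (ContinuousLinearMap.adjoint (Λ i) (Λ i (projL (V i) f))))
    (h : H) : A * ‖h‖ ≤ ‖SΛ h‖ := by
  rcases eq_or_ne h 0 with rfl | hh
  · simp
  have h1 : A * ‖h‖ ^ 2 ≤ (⟪h, SΛ h⟫).re := by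
    rw [gff_inner_self hΛ hSΛ]
    simpa using (hΛ.2.2.2 h).1
  have h2 : (⟪h, SΛ h⟫).re ≤ ‖h‖ * ‖SΛ h‖ := by
    refine le_trans (Complex.re_le_norm _) ?_
    exact norm_inner_le_norm _ _
  have hn : 0 < ‖h‖ := norm_pos_iff.mpr hh
  nlinarith

theorem gff_dual_bounds (hΛ : IsGFusionFrame V Λ v A B) {SΛ SΛi : H →L[ℂ] H}
    (hSΛ : ∀ f : H, SΛ f = ∑' i, ((v i) ^ 2 : ℝ) •
      projL (V i) (ContinuousLinearMap.adjoint (Λ i) (Λ i (projL (V i) f))))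
    (hSΛ1 : SΛ.comp SΛi = ContinuousLinearMap.id ℂ H) (f : H) :
    ‖f‖ ^ 2 / B ≤ ∑' i, (v i) ^ 2 * ‖Λ i (projL (V i) (SΛi f))‖ ^ 2 ∧
      ∑' i, (v i) ^ 2 * ‖Λ i (projL (V i) (SΛi f))‖ ^ 2 ≤ B * ‖f‖ ^ 2 / A ^ 2 := by
  have hA : (0:ℝ) < A := hΛ.2.1
  have hB : (0:ℝ) < B := lt_of_lt_of_le hA hΛ.2.2.1
  have hSf : SΛ (SΛi f) = f := by
    have h := ContinuousLinearMap.ext_iff.mp hSΛ1 f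
    simpa using h
  set f' : H := SΛi f with hf'
  have hSnn : (0:ℝ) ≤ ∑' i, (v i) ^ 2 * ‖Λ i (projL (V i) f')‖ ^ 2 :=
    tsum_nonneg fun i => by positivity
  constructor
  · -- lower bound
    have h1 : ‖f‖ ≤ Real.sqrt B * Real.sqrt (∑' i, (v i) ^ 2 * ‖Λ i (projL (V i) f')‖ ^ 2) := by
      have := gff_tsum_norm_le hΛ f'
      rw [← hSΛ f', hSf] at this
      exact this
    have h2 : ‖f‖ ^ 2 ≤ B * ∑' i, (v i) ^ 2 * ‖Λ i (projL (V i) f')‖ ^ 2 := by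
      have hs : (Real.sqrt B * Real.sqrt (∑' i, (v i) ^ 2 * ‖Λ i (projL (V i) f')‖ ^ 2)) ^ 2
          = B * ∑' i, (v i) ^ 2 * ‖Λ i (projL (V i) f')‖ ^ 2 := by
        rw [mul_pow, Real.sq_sqrt hB.le, Real.sq_sqrt hSnn]
      nlinarith [norm_nonneg f, Real.sqrt_nonneg B, Real.sqrt_nonneg
        (∑' i, (v i) ^ 2 * ‖Λ i (projL (V i) f')‖ ^ 2)]
    rw [div_le_iff₀ hB]
    linarith
  · -- upper bound
    have h1 : A * ‖f'‖ ≤ ‖f‖ := by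
      have := gff_op_lower hΛ hSΛ f'
      rwa [hSf] at this
    have h2 : ∑' i, (v i) ^ 2 * ‖Λ i (projL (V i) f')‖ ^ 2 ≤ B * ‖f'‖ ^ 2 := (hΛ.2.2.2 f').2
    have h3 : A ^ 2 * ‖f'‖ ^ 2 ≤ ‖f‖ ^ 2 := by
      have h0 : (0:ℝ) ≤ A * ‖f'‖ := by positivity
      nlinarith [mul_le_mul h1 h1 h0 (norm_nonneg f)]
    rw [le_div_iff₀ (by positivity)]
    nlinarith

end FrameAux

section TensorAux

theorem my_inner_self_re (x : H) : (⟪x, x⟫).re = ‖x‖ ^ 2 := by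
  have e := inner_self_eq_norm_sq (𝕜 := ℂ) x; simpa using e

theorem my_inner_self_im (x : H) : (⟪x, x⟫).im = 0 := by
  exact inner_self_im (𝕜 := ℂ) x

theorem tmul_norm_sq (tp : HilbertTensor H K E) (f : H) (g : K) :
    ‖tp.tmul f g‖ ^ 2 = ‖f‖ ^ 2 * ‖g‖ ^ 2 := by
  have h1 : (‖tp.tmul f g‖ ^ 2 : ℝ) = (⟪tp.tmul f g, tp.tmul f g⟫).re :=
    (my_inner_self_re _).symm
  rw [h1, tp.inner_tmul, Complex.mul_re, my_inner_self_re, my_inner_self_re,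
    my_inner_self_im, my_inner_self_im]
  ring

theorem inner_tsub_zero (tp : HilbertTensor H K E) (V : Submodule ℂ H) (W : Submodule ℂ K)
    {z : E} (hgen : ∀ a ∈ V, ∀ b ∈ W, ⟪tp.tmul a b, z⟫ = 0) :
    ∀ u ∈ tsub tp V W, ⟪u, z⟫ = 0 := by
  have hspan : ∀ u ∈ Submodule.span ℂ {x : E | ∃ f ∈ V, ∃ g ∈ W, x = tp.tmul f g},
      ⟪u, z⟫ = (0 : ℂ) := by
    intro u hu
    induction hu using Submodule.span_induction with
    | mem x hx => obtain ⟨a, ha, b, hb, rfl⟩ := hx; exact hgen a ha b hb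
    | zero => simp
    | add x y _ _ hx hy => rw [inner_add_left, hx, hy, add_zero]
    | smul c x _ hx => rw [inner_smul_left, hx, mul_zero]
  intro u hu
  have hcl : IsClosed {x : E | ⟪x, z⟫ = (0 : ℂ)} :=
    isClosed_eq (Continuous.inner continuous_id continuous_const) continuous_const
  exact closure_minimal hspan hcl hu

theorem projL_tsub (tp : HilbertTensor H K E) (V : Submodule ℂ H) (W : Submodule ℂ K)
    [HasOrthogonalProjection V] [HasOrthogonalProjection W]
    [HasOrthogonalProjection (tsub tp V W)] (f : H) (g : K) :
    projL (tsub tp V W) (tp.tmul f g) = tp.tmul (projL V f) (projL W g) := by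
  have hmem : tp.tmul (projL V f) (projL W g) ∈ tsub tp V W := by
    apply Submodule.le_topologicalClosure
    exact Submodule.subset_span
      ⟨projL V f, (orthogonalProjection V f).2, projL W g, (orthogonalProjection W g).2, rfl⟩
  have horth : tp.tmul f g - tp.tmul (projL V f) (projL W g) ∈ (tsub tp V W)ᗮ := by
    rw [Submodule.mem_orthogonal]
    refine inner_tsub_zero tp V W ?_
    intro a ha b hb
    rw [inner_sub_right, tp.inner_tmul, tp.inner_tmul]
    have hfa : ⟪a, projL V f⟫ = ⟪a, f⟫ := by
      rw [show projL V f = V.starProjection f from rfl, ← inner_starProjection_left_eq_right,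
        starProjection_eq_self_iff.mpr ha]
    have hgb : ⟪b, projL W g⟫ = ⟪b, g⟫ := by
      rw [show projL W g = W.starProjection g from rfl, ← inner_starProjection_left_eq_right,
        starProjection_eq_self_iff.mpr hb]
    rw [hfa, hgb, sub_self]
  rw [projL_apply]
  exact eq_starProjection_of_mem_orthogonal hmem horth

theorem S_symm_tensor (tp : HilbertTensor H K E) {SΛ : H →L[ℂ] H} {SΓ : K →L[ℂ] K}
    {S : E →L[ℂ] E} (hS : IsTensorOp tp tp SΛ SΓ S)
    (hΛs : ∀ f f' : H, ⟪SΛ f, f'⟫ = ⟪f, SΛ f'⟫)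
    (hΓs : ∀ g g' : K, ⟪SΓ g, g'⟫ = ⟪g, SΓ g'⟫) :
    ∀ x y : E, ⟪S x, y⟫ = ⟪x, S y⟫ := by
  have step1 : ∀ (f : H) (g : K) (y : E), ⟪S (tp.tmul f g), y⟫ = ⟪tp.tmul f g, S y⟫ := by
    intro f g
    have hfun : (fun y : E => ⟪S (tp.tmul f g), y⟫) = fun y : E => ⟪tp.tmul f g, S y⟫ := by
      refine Continuous.ext_on tp.dense_span
        (Continuous.inner continuous_const continuous_id)
        (Continuous.inner continuous_const S.continuous) ?_
      intro y hy
      induction hy using Submodule.span_induction with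
      | mem x hx =>
          obtain ⟨⟨f', g'⟩, rfl⟩ := hx
          show ⟪S (tp.tmul f g), tp.tmul f' g'⟫ = ⟪tp.tmul f g, S (tp.tmul f' g')⟫
          rw [hS f g, hS f' g', tp.inner_tmul, tp.inner_tmul, hΛs, hΓs]
      | zero => simp
      | add x y _ _ hx hy =>
          show ⟪S (tp.tmul f g), x + y⟫ = ⟪tp.tmul f g, S (x + y)⟫
          rw [map_add, inner_add_right, inner_add_right]
          exact congrArg₂ (· + ·) hx hy
      | smul c x _ hx =>
          show ⟪S (tp.tmul f g), c • x⟫ = ⟪tp.tmul f g, S (c • x)⟫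
          rw [map_smul, inner_smul_right, inner_smul_right]
          exact congrArg (c * ·) hx
    intro y
    exact congrFun hfun y
  intro x y
  have hfun : (fun x : E => ⟪S x, y⟫) = fun x : E => ⟪x, S y⟫ := by
    refine Continuous.ext_on tp.dense_span
      (Continuous.inner (S.continuous) continuous_const)
      (Continuous.inner continuous_id continuous_const) ?_
    intro x hx
    induction hx using Submodule.span_induction with
    | mem z hz =>
        obtain ⟨⟨f, g⟩, rfl⟩ := hz
        exact step1 f g y
    | zero => simp
    | add a b _ _ ha hb =>
        show ⟪S (a + b), y⟫ = ⟪a + b, S y⟫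
        rw [map_add, inner_add_left, inner_add_left]
        exact congrArg₂ (· + ·) ha hb
    | smul c a _ ha =>
        show ⟪S (c • a), y⟫ = ⟪c • a, S y⟫
        rw [map_smul, inner_smul_left, inner_smul_left]
        exact congrArg ((starRingEnd ℂ) c * ·) ha
  exact congrFun hfun x

theorem proj_Si_proj [CompleteSpace E] (Si : E →L[ℂ] E)
    (hsymm : ∀ x y : E, ⟪Si x, y⟫ = ⟪x, Si y⟫)
    (M : Submodule ℂ E) [HasOrthogonalProjection M]
    [HasOrthogonalProjection (M.map Si.toLinearMap)] (x : E) :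
    projL M (Si (projL (M.map Si.toLinearMap) x)) = projL M (Si x) := by
  set N := M.map Si.toLinearMap with hN
  have hq : x - projL N x ∈ Nᗮ := sub_starProjection_mem_orthogonal x
  have hSiq : Si (x - projL N x) ∈ Mᗮ := by
    rw [Submodule.mem_orthogonal]
    intro u hu
    rw [← hsymm u (x - projL N x)]
    exact (Submodule.mem_orthogonal N _).mp hq (Si u) (Submodule.mem_map_of_mem hu)
  have h1 : projL M (Si x) - projL M (Si (projL N x)) = projL M (Si (x - projL N x)) := by
    rw [map_sub, map_sub]
  have h2 : projL M (Si (x - projL N x)) = 0 := by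
    rw [projL_apply, orthogonalProjection_mem_subspace_orthogonalComplement_eq_zero hSiq,
      Submodule.coe_zero]
  have h3 := h1.trans h2
  have := sub_eq_zero.mp h3
  exact this.symm

end TensorAux

set_option maxHeartbeats 2000000 in
/-- the canonical dual family
`Θ = {(S⁻¹(V_i ⊗ W_j), (Λ_i ⊗ Γ_j) P_{V_i ⊗ W_j} S⁻¹, v_i w_j)}` is a g-fusion frame
for `H ⊗ K` with bounds `1/(BD)` and `BD/(A²C²)`. -/
theorem stmt_14 {ι κ : Type*} [CompleteSpace H] [CompleteSpace K] [CompleteSpace E]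
    {Hi : ι → Type*} [∀ i, NormedAddCommGroup (Hi i)] [∀ i, InnerProductSpace ℂ (Hi i)]
    [∀ i, CompleteSpace (Hi i)]
    {Kj : κ → Type*} [∀ j, NormedAddCommGroup (Kj j)] [∀ j, InnerProductSpace ℂ (Kj j)]
    [∀ j, CompleteSpace (Kj j)]
    {Eij : ι → κ → Type*} [∀ i j, NormedAddCommGroup (Eij i j)]
    [∀ i j, InnerProductSpace ℂ (Eij i j)] [∀ i j, CompleteSpace (Eij i j)]
    (tp : HilbertTensor H K E) (tpij : ∀ i j, HilbertTensor (Hi i) (Kj j) (Eij i j))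
    (V : ι → Submodule ℂ H) [∀ i, HasOrthogonalProjection (V i)]
    (W : κ → Submodule ℂ K) [∀ j, HasOrthogonalProjection (W j)]
    [∀ i j, HasOrthogonalProjection (tsub tp (V i) (W j))]
    (Λ : ∀ i, H →L[ℂ] Hi i) (Γ : ∀ j, K →L[ℂ] Kj j)
    (v : ι → ℝ) (w : κ → ℝ) (A B C D : ℝ)
    (hΛ : IsGFusionFrame V Λ v A B) (hΓ : IsGFusionFrame W Γ w C D)
    (Rij : ∀ i j, E →L[ℂ] Eij i j)
    (hRij : ∀ i j, IsTensorOp tp (tpij i j) (Λ i) (Γ j) (Rij i j))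
    (SΛ SΛi : H →L[ℂ] H) (SΓ SΓi : K →L[ℂ] K)
    (hSΛ : ∀ f : H, SΛ f = ∑' i, ((v i) ^ 2 : ℝ) •
      projL (V i) (ContinuousLinearMap.adjoint (Λ i) (Λ i (projL (V i) f))))
    (hSΓ : ∀ g : K, SΓ g = ∑' j, ((w j) ^ 2 : ℝ) •
      projL (W j) (ContinuousLinearMap.adjoint (Γ j) (Γ j (projL (W j) g))))
    (hSΛ1 : SΛ.comp SΛi = ContinuousLinearMap.id ℂ H)
    (hSΛ2 : SΛi.comp SΛ = ContinuousLinearMap.id ℂ H)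
    (hSΓ1 : SΓ.comp SΓi = ContinuousLinearMap.id ℂ K)
    (hSΓ2 : SΓi.comp SΓ = ContinuousLinearMap.id ℂ K)
    (S Si : E →L[ℂ] E)
    (hS : IsTensorOp tp tp SΛ SΓ S) (hSi : IsTensorOp tp tp SΛi SΓi Si)
    (hS1 : S.comp Si = ContinuousLinearMap.id ℂ E)
    (hS2 : Si.comp S = ContinuousLinearMap.id ℂ E)
    [∀ i j, HasOrthogonalProjection ((tsub tp (V i) (W j)).map Si.toLinearMap)] :
    ∀ (f : H) (g : K),
      1 / (B * D) * ‖tp.tmul f g‖ ^ 2 ≤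
        ∑' p : ι × κ, (v p.1 * w p.2) ^ 2 *
          ‖Rij p.1 p.2 (projL (tsub tp (V p.1) (W p.2))
            (Si (projL ((tsub tp (V p.1) (W p.2)).map Si.toLinearMap) (tp.tmul f g))))‖ ^ 2 ∧
      ∑' p : ι × κ, (v p.1 * w p.2) ^ 2 *
          ‖Rij p.1 p.2 (projL (tsub tp (V p.1) (W p.2))
            (Si (projL ((tsub tp (V p.1) (W p.2)).map Si.toLinearMap) (tp.tmul f g))))‖ ^ 2 ≤
        B * D / (A ^ 2 * C ^ 2) * ‖tp.tmul f g‖ ^ 2 := by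
  intro f g
  have hA : (0:ℝ) < A := hΛ.2.1
  have hB : (0:ℝ) < B := lt_of_lt_of_le hA hΛ.2.2.1
  have hC : (0:ℝ) < C := hΓ.2.1
  have hD : (0:ℝ) < D := lt_of_lt_of_le hC hΓ.2.2.1
  have hΛsymm : ∀ a b : H, ⟪SΛ a, b⟫ = ⟪a, SΛ b⟫ := gff_symm hΛ hSΛ
  have hΓsymm : ∀ a b : K, ⟪SΓ a, b⟫ = ⟪a, SΓ b⟫ := gff_symm hΓ hSΓ
  have hSsymm : ∀ x y : E, ⟪S x, y⟫ = ⟪x, S y⟫ := S_symm_tensor tp hS hΛsymm hΓsymm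
  have hSisymm : ∀ x y : E, ⟪Si x, y⟫ = ⟪x, Si y⟫ := by
    intro x y
    have h1 : S (Si y) = y := by
      have := ContinuousLinearMap.ext_iff.mp hS1 y; simpa using this
    have h2 : S (Si x) = x := by
      have := ContinuousLinearMap.ext_iff.mp hS1 x; simpa using this
    calc ⟪Si x, y⟫ = ⟪Si x, S (Si y)⟫ := by rw [h1]
      _ = ⟪S (Si x), Si y⟫ := (hSsymm _ _).symm
      _ = ⟪x, Si y⟫ := by rw [h2]
  have hSix : Si (tp.tmul f g) = tp.tmul (SΛi f) (SΓi g) := hSi f g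
  have hterm : ∀ p : ι × κ,
      (v p.1 * w p.2) ^ 2 * ‖Rij p.1 p.2 (projL (tsub tp (V p.1) (W p.2))
        (Si (projL ((tsub tp (V p.1) (W p.2)).map Si.toLinearMap) (tp.tmul f g))))‖ ^ 2
      = ((v p.1) ^ 2 * ‖Λ p.1 (projL (V p.1) (SΛi f))‖ ^ 2)
        * ((w p.2) ^ 2 * ‖Γ p.2 (projL (W p.2) (SΓi g))‖ ^ 2) := by
    rintro ⟨i, j⟩
    have e1 : projL (tsub tp (V i) (W j))
        (Si (projL ((tsub tp (V i) (W j)).map Si.toLinearMap) (tp.tmul f g)))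
        = projL (tsub tp (V i) (W j)) (Si (tp.tmul f g)) :=
      proj_Si_proj Si hSisymm _ (tp.tmul f g)
    rw [e1, hSix, projL_tsub tp (V i) (W j), hRij i j, tmul_norm_sq (tpij i j)]
    ring
  have hsum1 := gff_summable hΛ (SΛi f)
  have hsum2 := gff_summable hΓ (SΓi g)
  have hfg : Summable fun p : ι × κ =>
      ((v p.1) ^ 2 * ‖Λ p.1 (projL (V p.1) (SΛi f))‖ ^ 2)
        * ((w p.2) ^ 2 * ‖Γ p.2 (projL (W p.2) (SΓi g))‖ ^ 2) :=
    hsum1.mul_of_nonneg hsum2 (fun i => by positivity) (fun j => by positivity)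
  have hprod : ∑' p : ι × κ,
      ((v p.1) ^ 2 * ‖Λ p.1 (projL (V p.1) (SΛi f))‖ ^ 2)
        * ((w p.2) ^ 2 * ‖Γ p.2 (projL (W p.2) (SΓi g))‖ ^ 2)
      = (∑' i, (v i) ^ 2 * ‖Λ i (projL (V i) (SΛi f))‖ ^ 2)
        * (∑' j, (w j) ^ 2 * ‖Γ j (projL (W j) (SΓi g))‖ ^ 2) :=
    (Summable.tsum_mul_tsum hsum1 hsum2 hfg).symm
  have hb1 := gff_dual_bounds hΛ hSΛ hSΛ1 f
  have hb2 := gff_dual_bounds hΓ hSΓ hSΓ1 g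
  have hx2 : ‖tp.tmul f g‖ ^ 2 = ‖f‖ ^ 2 * ‖g‖ ^ 2 := tmul_norm_sq tp f g
  have hnn1 : (0:ℝ) ≤ ∑' i, (v i) ^ 2 * ‖Λ i (projL (V i) (SΛi f))‖ ^ 2 :=
    tsum_nonneg fun i => by positivity
  have hnn2 : (0:ℝ) ≤ ∑' j, (w j) ^ 2 * ‖Γ j (projL (W j) (SΓi g))‖ ^ 2 :=
    tsum_nonneg fun j => by positivity
  rw [tsum_congr hterm, hprod, hx2]
  have heq1 : 1 / (B * D) * (‖f‖ ^ 2 * ‖g‖ ^ 2) = (‖f‖ ^ 2 / B) * (‖g‖ ^ 2 / D) := by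
    field_simp
  have heq2 : (B * ‖f‖ ^ 2 / A ^ 2) * (D * ‖g‖ ^ 2 / C ^ 2)
      = B * D / (A ^ 2 * C ^ 2) * (‖f‖ ^ 2 * ‖g‖ ^ 2) := by
    field_simp
  constructor
  · rw [heq1]
    exact mul_le_mul hb1.1 hb2.1 (by positivity) hnn1
  · rw [← heq2]
    exact mul_le_mul hb1.2 hb2.2 hnn2 (by positivity)
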